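/- For any non-bipartite graph F with odd girth g, rex(n, F) ≥ n²/(g+6) - O(n): there is a constant C = C(g) such that for every n there exists an F-free regular graph on n vertices with at least n²/(g+6) - C·n edges. -/

import Mathlib

open SimpleGraph Set Function
namespace RexAux
-- assume previous defs via copy; here test degB standalone by pasting minimal defs
def P (a q i j : ℕ) : Prop := (i ≤ j ∧ j < i + 2*q) ∨ (j + a < i + 2*q)
def rel (a q m x y : ℕ) : Prop :=
  (x < a ∧ a ≤ y ∧ y < 2*a ∧ P a q x (y - a)) ∨
  (y < a ∧ a ≤ x ∧ x < 2*a ∧ P a q y (x - a)) ∨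
  (2*a ≤ x ∧ 2*a ≤ y ∧
    ((y - 2*a)/q = ((x - 2*a)/q + 1) % m ∨ (x - 2*a)/q = ((y - 2*a)/q + 1) % m))
instance (a q i j : ℕ) : Decidable (P a q i j) := by unfold P; infer_instance
instance (a q m x y : ℕ) : Decidable (rel a q m x y) := by unfold rel; infer_instance
lemma rel_symm {a q m x y : ℕ} (h : rel a q m x y) : rel a q m y x := by
  unfold rel at *; tauto
def G (n a q m : ℕ) : SimpleGraph (Fin n) where
  Adj v w := rel a q m v.val w.val ∧ v ≠ w
  symm := ⟨fun _ _ h => ⟨rel_symm h.1, h.2.symm⟩⟩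
  loopless := ⟨fun _ h => h.2 rfl⟩
instance (n a q m : ℕ) : DecidableRel (G n a q m).Adj := fun v w =>
  inferInstanceAs (Decidable (rel a q m v.val w.val ∧ v ≠ w))
lemma mod_succ_cancel {m c : ℕ} (hc : c < m) : ((c + (m-1)) % m + 1) % m = c := by
  rw [Nat.mod_add_mod]
  have h1 : c + (m-1) + 1 = c + m := by omega
  rw [h1, Nat.add_mod_right, Nat.mod_eq_of_lt hc]
lemma succ_mod_inj {m x y : ℕ} (hx : x < m) (hy : y < m)
    (h : (x+1) % m = (y+1) % m) : x = y := by
  have hx' : ((x+1) % m + (m-1)) % m = x := by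
    rw [Nat.mod_add_mod]
    have : x + 1 + (m-1) = x + m := by omega
    rw [this, Nat.add_mod_right, Nat.mod_eq_of_lt hx]
  have hy' : ((y+1) % m + (m-1)) % m = y := by
    rw [Nat.mod_add_mod]
    have : y + 1 + (m-1) = y + m := by omega
    rw [this, Nat.add_mod_right, Nat.mod_eq_of_lt hy]
  rw [← hx', h, hy']
lemma succ_mod_ne_self {m c : ℕ} (hm : 2 ≤ m) (hc : c < m) : (c+1) % m ≠ c := by
  intro h
  rcases Nat.lt_or_ge (c+1) m with h1 | h1
  · rw [Nat.mod_eq_of_lt h1] at h; omega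
  · have : c + 1 = m := by omega
    rw [this, Nat.mod_self] at h; omega
lemma pred_mod_ne_self {m c : ℕ} (hm : 2 ≤ m) (hc : c < m) : (c+(m-1)) % m ≠ c := by
  intro h
  have := mod_succ_cancel hc
  rw [h] at this
  exact succ_mod_ne_self hm hc this
lemma succ_ne_pred {m c : ℕ} (hm : 3 ≤ m) (hc : c < m) :
    (c+1) % m ≠ (c+(m-1)) % m := by
  intro h
  have h2 := mod_succ_cancel hc
  rw [← h, Nat.mod_add_mod] at h2
  rcases Nat.lt_or_ge (c+2) m with h1 | h1
  · rw [Nat.mod_eq_of_lt h1] at h2; omega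
  · rcases Nat.eq_or_lt_of_le h1 with h3 | h3
    · rw [← h3, Nat.mod_self] at h2; omega
    · have h4 : c + 1 + 1 = m + 1 := by omega
      rw [h4, Nat.add_mod_left] at h2
      have : 1 % m = 1 := Nat.mod_eq_of_lt (by omega)
      omega
lemma ncard_eq_of_image {n : ℕ} (S : Set (Fin n)) (k : ℕ) (f : ℕ → ℕ)
    (hinj : ∀ t1 < k, ∀ t2 < k, f t1 = f t2 → t1 = t2)
    (hS : Fin.val '' S = ↑((Finset.range k).image f)) : S.ncard = k := by
  rw [← Set.ncard_image_of_injective S Fin.val_injective, hS, Set.ncard_coe_finset,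
    Finset.card_image_of_injOn, Finset.card_range]
  intro t1 h1 t2 h2 h
  exact hinj t1 (Finset.mem_range.1 h1) t2 (Finset.mem_range.1 h2) h
lemma mem_image_nb {n a q m : ℕ} (v : Fin n) (y : ℕ) :
    y ∈ Fin.val '' ((G n a q m).neighborSet v) ↔
      y < n ∧ rel a q m v.val y ∧ y ≠ v.val := by
  constructor
  · rintro ⟨w, hw, rfl⟩
    exact ⟨w.isLt, hw.1, fun h => hw.2 (Fin.val_injective h).symm⟩
  · rintro ⟨h1, h2, h3⟩
    exact ⟨⟨y, h1⟩, ⟨h2, fun h => h3 (congrArg Fin.val h).symm⟩, rfl⟩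

-- helper: divide facts
lemma div_block {q d t : ℕ} (hq : 0 < q) (ht : t < q) : (d*q + t)/q = d := by
  rw [Nat.add_comm, Nat.add_mul_div_right _ _ hq, Nat.div_eq_of_lt ht, Nat.zero_add]

lemma degB {n a q m : ℕ} (hm : 3 ≤ m) (hn : n = 2*a + m*q)
    (v : Fin n) (hv : 2*a ≤ v.val) :
    ((G n a q m).neighborSet v).ncard = 2*q := by
  have hq : 0 < q := by
    rcases Nat.eq_zero_or_pos q with h | h
    · exfalso
      rw [h, Nat.mul_zero] at hn
      have := v.isLt; omega
    · exact h
  set c := (v.val - 2*a)/q with hcdef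
  have hc : c < m := by
    rw [hcdef]
    exact Nat.div_lt_of_lt_mul (by rw [Nat.mul_comm q m]; have := v.isLt; omega)
  set dp := (c+1) % m with hdp
  set dm := (c+(m-1)) % m with hdm
  have hdp_lt : dp < m := Nat.mod_lt _ (by omega)
  have hdm_lt : dm < m := Nat.mod_lt _ (by omega)
  have hdm_succ : (dm + 1) % m = c := mod_succ_cancel hc
  have hne : dp ≠ dm := succ_ne_pred hm hc
  have hdp_ne : dp ≠ c := succ_mod_ne_self (by omega) hc
  have hdm_ne : dm ≠ c := pred_mod_ne_self (by omega) hc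
  have hblock : ∀ d, d < m → ∀ t, t < q → 2*a + (d*q + t) < n ∧ ((2*a + (d*q+t)) - 2*a)/q = d := by
    intro d hd t ht
    have h1 : (d+1)*q ≤ m*q := Nat.mul_le_mul_right q (by omega)
    have h2 : (d+1)*q = d*q + q := by ring
    constructor
    · omega
    · have h3 : 2*a + (d*q+t) - 2*a = d*q + t := by omega
      rw [h3]; exact div_block hq ht
  apply ncard_eq_of_image _ _
    (fun t => if t < q then 2*a + (dp*q + t) else 2*a + (dm*q + (t - q)))
  · intro t1 h1 t2 h2 h
    have e1 : (dp+1)*q = dp*q + q := by ring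
    have e2 : (dm+1)*q = dm*q + q := by ring
    have hd1 : (dp+1)*q ≤ dm*q ∨ (dm+1)*q ≤ dp*q := by
      rcases Nat.lt_or_ge dp dm with h' | h'
      · exact Or.inl (Nat.mul_le_mul_right q (by omega))
      · exact Or.inr (Nat.mul_le_mul_right q (by omega))
    split_ifs at h <;> omega
  · ext y
    rw [mem_image_nb]
    simp only [Finset.coe_image, Finset.mem_coe, Set.mem_image, Finset.mem_coe,
      Finset.mem_range]
    constructor
    · rintro ⟨h1, h2, h3⟩
      rcases h2 with ⟨hy1, _, _, _⟩ | ⟨_, hy2, hy3, _⟩ | ⟨_, hy1, hy2⟩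
      · omega
      · omega
      · -- B-B edge
        have hcy_lt : (y - 2*a)/q < m :=
          Nat.div_lt_of_lt_mul (by rw [Nat.mul_comm q m]; omega)
        have hrq : (y - 2*a) % q < q := Nat.mod_lt _ hq
        have hmod : q * ((y - 2*a)/q) + (y - 2*a) % q = y - 2*a := Nat.div_add_mod _ _
        rcases hy2 with h4 | h4
        · rw [← hcdef, ← hdp] at h4
          refine ⟨(y - 2*a) % q, by omega, ?_⟩
          rw [if_pos hrq, ← h4]
          have hcomm : q * ((y - 2*a)/q) = ((y - 2*a)/q) * q := Nat.mul_comm _ _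
          omega
        · rw [← hcdef] at h4
          have h5 : (y - 2*a)/q = dm :=
            succ_mod_inj hcy_lt hdm_lt (by rw [hdm_succ, ← h4])
          refine ⟨q + (y - 2*a) % q, by omega, ?_⟩
          rw [if_neg (by omega), ← h5]
          have h6 : q + (y - 2*a) % q - q = (y - 2*a) % q := by omega
          rw [h6]
          have hcomm : q * ((y - 2*a)/q) = ((y - 2*a)/q) * q := Nat.mul_comm _ _
          omega
    · rintro ⟨t, ht, rfl⟩
      split_ifs with hsplit
      · obtain ⟨hlt, hdiv⟩ := hblock dp hdp_lt t hsplit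
        refine ⟨hlt, Or.inr (Or.inr ⟨hv, by omega, Or.inl (by rw [hdiv, ← hcdef, ← hdp])⟩), ?_⟩
        intro h
        apply hdp_ne
        rw [← hdiv, h, ← hcdef]
      · obtain ⟨hlt, hdiv⟩ := hblock dm hdm_lt (t - q) (by omega)
        refine ⟨hlt, Or.inr (Or.inr ⟨hv, by omega, Or.inr (by rw [hdiv, ← hcdef, hdm_succ])⟩), ?_⟩
        intro h
        apply hdm_ne
        rw [← hdiv, h, ← hcdef]

def lv (a q m : ℕ) (x : ℕ) : ZMod m :=
  if x < a then 0 else if x < 2*a then 1 else ((x - 2*a)/q : ℕ)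

lemma lv_step {n a q m : ℕ} {v w : Fin n} (h : (G n a q m).Adj v w) :
    lv a q m w.val = lv a q m v.val + 1 ∨ lv a q m v.val = lv a q m w.val + 1 := by
  rcases h.1 with ⟨h1, h2, h3, _⟩ | ⟨h1, h2, h3, _⟩ | ⟨h1, h2, h3⟩
  · left
    unfold lv
    rw [if_pos h1, if_neg (by omega), if_pos h3]
    exact (zero_add 1).symm
  · right
    unfold lv
    rw [if_pos h1, if_neg (by omega), if_pos h3]
    exact (zero_add 1).symm
  · unfold lv
    rw [if_neg (by omega), if_neg (by omega), if_neg (by omega), if_neg (by omega)]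
    rcases h3 with h4 | h4
    · left; rw [h4, ZMod.natCast_mod]; push_cast; ring
    · right; rw [h4, ZMod.natCast_mod]; push_cast; ring

lemma walk_level {n a q m : ℕ} {u v : Fin n} (w : (G n a q m).Walk u v) :
    ∃ p1 p2 : ℕ, p1 + p2 = w.length ∧
      lv a q m v.val + (p2 : ZMod m) = lv a q m u.val + p1 := by
  induction w with
  | nil => exact ⟨0, 0, rfl, by simp⟩
  | cons h p ih =>
    obtain ⟨p1, p2, hl, he⟩ := ih
    rcases lv_step h with h1 | h1
    · refine ⟨p1 + 1, p2, by simp [Walk.length_cons]; omega, ?_⟩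
      rw [he, h1]; push_cast; ring
    · refine ⟨p1, p2 + 1, by simp [Walk.length_cons]; omega, ?_⟩
      rw [h1]; push_cast; linear_combination he

/-- no odd closed walk of length `< m`. -/
lemma no_short_odd_closed_walk {n a q m : ℕ} {u : Fin n}
    (w : (G n a q m).Walk u u) (hodd : Odd w.length) (hlt : w.length < m) : False := by
  obtain ⟨p1, p2, hl, he⟩ := walk_level w
  have hm0 : 0 < m := by omega
  have : (p1 : ZMod m) = (p2 : ZMod m) := by
    have := add_left_cancel he
    exact this.symm
  have hp : p1 = p2 := by
    have : (p1 : ZMod m).val = (p2 : ZMod m).val := by rw [this]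
    rwa [ZMod.val_natCast_of_lt (by omega), ZMod.val_natCast_of_lt (by omega)] at this
  obtain ⟨k, hk⟩ := hodd
  omega


lemma degX {n a q m : ℕ} (ha : 2*q ≤ a) (hn : n = 2*a + m*q)
    (v : Fin n) (hv : v.val < a) :
    ((G n a q m).neighborSet v).ncard = 2*q := by
  apply ncard_eq_of_image _ _
    (fun t => a + (if v.val + t < a then v.val + t else v.val + t - a))
  · intro t1 h1 t2 h2 h
    split_ifs at h <;> omega
  · ext y
    rw [mem_image_nb]
    simp only [Finset.coe_image, Finset.mem_coe, Set.mem_image, Finset.mem_coe,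
      Finset.mem_range, Finset.coe_range, Set.mem_image, Set.mem_Iio]
    constructor
    · rintro ⟨h1, h2, h3⟩
      rcases h2 with ⟨_, hy1, hy2, hP⟩ | ⟨hy1, hy2, _⟩ | ⟨hy1, _⟩
      · rcases hP with ⟨hp1, hp2⟩ | hp
        · exact ⟨(y - a) - v.val, by omega, by split_ifs <;> omega⟩
        · exact ⟨(y - a) + a - v.val, by omega, by split_ifs <;> omega⟩
      · omega
      · omega
    · rintro ⟨t, ht, rfl⟩
      split_ifs with hsplit
      · refine ⟨by omega, Or.inl ⟨hv, by omega, by omega, Or.inl ⟨by omega, by omega⟩⟩, by omega⟩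
      · refine ⟨by omega, Or.inl ⟨hv, by omega, by omega, Or.inr (by omega)⟩, by omega⟩

lemma degY {n a q m : ℕ} (ha : 2*q ≤ a) (hn : n = 2*a + m*q)
    (v : Fin n) (hv1 : a ≤ v.val) (hv : v.val < 2*a) :
    ((G n a q m).neighborSet v).ncard = 2*q := by
  apply ncard_eq_of_image _ _
    (fun t => if t ≤ v.val - a then (v.val - a) - t else (v.val - a) + a - t)
  · intro t1 h1 t2 h2 h
    split_ifs at h <;> omega
  · ext y
    rw [mem_image_nb]
    simp only [Finset.coe_image, Finset.mem_coe, Set.mem_image, Finset.mem_coe,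
      Finset.mem_range]
    constructor
    · rintro ⟨h1, h2, h3⟩
      rcases h2 with ⟨hy1, hy2, _⟩ | ⟨hy1, _, _, hP⟩ | ⟨hy1, _⟩
      · omega
      · rcases hP with ⟨hp1, hp2⟩ | hp
        · exact ⟨(v.val - a) - y, by omega, by split_ifs <;> omega⟩
        · exact ⟨(v.val - a) + a - y, by omega, by split_ifs <;> omega⟩
      · omega
    · rintro ⟨t, ht, rfl⟩
      split_ifs with hsplit
      · refine ⟨by omega, Or.inr (Or.inl ⟨by omega, hv1, hv, Or.inl ⟨by omega, by omega⟩⟩), by omega⟩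
      · refine ⟨by omega, Or.inr (Or.inl ⟨by omega, hv1, hv, Or.inr (by omega)⟩), by omega⟩



lemma ncard_nb_eq_degree {n a q m : ℕ} (v : Fin n) :
    ((G n a q m).neighborSet v).ncard = (G n a q m).degree v := by
  rw [SimpleGraph.degree, SimpleGraph.neighborFinset, ← Set.ncard_coe_finset, Set.coe_toFinset]

lemma deg_all {n a q m : ℕ} (hm : 3 ≤ m) (ha : 2*q ≤ a) (hn : n = 2*a + m*q)
    (v : Fin n) : ((G n a q m).neighborSet v).ncard = 2*q := by
  rcases Nat.lt_or_ge v.val a with h1 | h1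
  · exact degX ha hn v h1
  · rcases Nat.lt_or_ge v.val (2*a) with h2 | h2
    · exact degY ha hn v h1 h2
    · exact degB hm hn v h2

lemma edge_count {n a q m : ℕ} (hm : 3 ≤ m) (ha : 2*q ≤ a) (hn : n = 2*a + m*q) :
    (G n a q m).edgeSet.ncard = n * q := by
  have hdeg : ∀ v, (G n a q m).degree v = 2*q := fun v => by
    rw [← ncard_nb_eq_degree, deg_all hm ha hn]
  have hsum := SimpleGraph.sum_degrees_eq_twice_card_edges (G n a q m)
  simp only [hdeg, Finset.sum_const, Finset.card_univ, Fintype.card_fin, smul_eq_mul] at hsum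
  rw [← SimpleGraph.coe_edgeFinset, Set.ncard_coe_finset]
  have h2 : n * (2*q) = 2 * (n*q) := by ring
  omega

end RexAux

open RexAux in
/-- `rex(n, F) ≥ n²/(g+6) - O(n)` for a non-bipartite graph `F` of odd girth `g`: there
is a constant `C` such that for every `n` there is an `F`-free regular graph on `n`
vertices with at least `n²/(g+6) - C·n` edges. -/
theorem rex_lower_bound_odd_girth {W : Type*} (F : SimpleGraph W) (g : ℕ) (hodd : Odd g)
    (hgirth : ∃ (v : W) (w : F.Walk v v), w.IsCycle ∧ w.length = g)
    (hmin : ∀ (v : W) (w : F.Walk v v), w.IsCycle → Odd w.length → g ≤ w.length) :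
    ∃ C : ℝ, ∀ n : ℕ, ∃ G : SimpleGraph (Fin n),
      (∃ d : ℕ, ∀ v, (G.neighborSet v).ncard = d) ∧
      (¬∃ f : W → Fin n, Injective f ∧ ∀ a b, F.Adj a b → G.Adj (f a) (f b)) ∧
      (n : ℝ) ^ 2 / (g + 6) - C * n ≤ G.edgeSet.ncard := by
  obtain ⟨v0, w0, hc0, hl0⟩ := hgirth
  obtain ⟨k0, hk0⟩ := hodd
  have hedge : ∃ x y : W, F.Adj x y := by
    cases w0 with
    | nil => simp only [SimpleGraph.Walk.length_nil] at hl0; omega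
    | cons h p => exact ⟨_, _, h⟩
  refine ⟨4, fun n => ?_⟩
  have hM7 : 7 ≤ g + 6 := by omega
  by_cases hsmall : n < g + 6
  · refine ⟨⊥, ⟨0, fun v => ?_⟩, ?_, ?_⟩
    · have hns : (⊥ : SimpleGraph (Fin n)).neighborSet v = ∅ := by
        ext w; simp [SimpleGraph.neighborSet]
      rw [hns, Set.ncard_empty]
    · rintro ⟨f, _, hadj⟩
      obtain ⟨x, y, hxy⟩ := hedge
      exact hadj x y hxy
    · rw [SimpleGraph.edgeSet_bot, Set.ncard_empty]
      have hn4 : (n : ℝ) ≤ 4 * ((g:ℝ) + 6) := by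
        have : (n : ℝ) ≤ (g:ℝ) + 6 := by exact_mod_cast (by omega : n ≤ g + 6)
        nlinarith
      have hgpos : (0:ℝ) < (g:ℝ) + 6 := by positivity
      rw [Nat.cast_zero, sub_nonpos, div_le_iff₀ hgpos]
      nlinarith [Nat.cast_nonneg (α := ℝ) n]
  · -- main construction
    push_neg at hsmall
    set m := g + 2 with hmdef
    set M := g + 6 with hMdef
    have hm3 : 3 ≤ m := by omega
    obtain ⟨D, E, hDE, hE⟩ : ∃ D E, M * D + E = n ∧ E < M :=
      ⟨n / M, n % M, Nat.div_add_mod n M, Nat.mod_lt n (by omega)⟩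
    have hD1 : 1 ≤ D := by
      by_contra h
      have : D = 0 := by omega
      rw [this, Nat.mul_zero] at hDE
      omega
    set q := if D % 2 = n % 2 then D else D - 1 with hqdef
    have hMq : M * q = M * D ∨ M * q + M = M * D := by
      rw [hqdef]
      split_ifs
      · exact Or.inl rfl
      · right
        have h1 : D - 1 + 1 = D := by omega
        calc M * (D-1) + M = M * (D - 1 + 1) := by ring
          _ = M * D := by rw [h1]
    have hpar : (M * q) % 2 = q % 2 := by
      have hM2 : M % 2 = 1 := by omega
      rw [Nat.mul_mod, hM2]
      omega
    have hqpar : q % 2 = n % 2 := by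
      rw [hqdef]
      split_ifs with h
      · exact h
      · omega
    have hle : M * q ≤ n ∧ n - M * q < 2 * M := by
      rcases hMq with h | h <;> omega
    have heven : (n - M * q) % 2 = 0 := by
      have h2 : n % 2 = ((M*q) % 2 + (n - M*q) % 2) % 2 := by omega
      omega
    set s := (n - M * q) / 2 with hsdef
    have hs2 : 2 * s = n - M * q := by omega
    set a := 2 * q + s with hadef
    have hn : n = 2 * a + m * q := by
      have h1 : M * q = m * q + 4 * q := by rw [hMdef, hmdef]; ring
      omega
    have ha : 2 * q ≤ a := by omega
    refine ⟨G n a q m, ⟨2*q, fun v => deg_all hm3 ha hn v⟩, ?_, ?_⟩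
    · rintro ⟨f, _, hadj⟩
      have hom : F →g (G n a q m) := ⟨f, fun h => hadj _ _ h⟩
      have hlen : (SimpleGraph.Walk.map hom w0).length = g :=
        (SimpleGraph.Walk.length_map hom w0).trans hl0
      exact no_short_odd_closed_walk (SimpleGraph.Walk.map hom w0)
        (by rw [hlen]; exact ⟨k0, hk0⟩) (by rw [hlen]; omega)
    · rw [edge_count hm3 ha hn]
      have hnb : n ≤ M * q + 4 * M := by omega
      have hgpos : (0:ℝ) < (g:ℝ) + 6 := by positivity
      have hMcast : ((M:ℕ):ℝ) = (g:ℝ) + 6 := by rw [hMdef]; push_cast; ring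
      rw [sub_le_iff_le_add, div_le_iff₀ hgpos]
      have h1 : (n:ℝ) ≤ ((M*q : ℕ) : ℝ) + 4*((M:ℕ):ℝ) := by exact_mod_cast hnb
      push_cast at h1 ⊢
      nlinarith [Nat.cast_nonneg (α := ℝ) n, mul_le_mul_of_nonneg_left h1 (Nat.cast_nonneg (α := ℝ) n)]
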